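/- If a cone-valued map Φ : X ⇉ X* is norm-to-weak* base upper semicontinuous at x ∈ X, then it is norm-to-weak* cone upper semicontinuous at x. -/
import Mathlib


open Topology Filter

def IsCone {D : Type*} [SMul ℝ D] (K : Set D) : Prop :=
  ∀ p ∈ K, ∀ t : ℝ, 0 < t → t • p ∈ K

def IsBase {D : Type*} [AddCommMonoid D] [Module ℝ D] [TopologicalSpace D]
    (K A : Set D) : Prop :=
  Convex ℝ A ∧ A ⊆ K ∧ K = {p | ∃ t : ℝ, 0 ≤ t ∧ ∃ a ∈ A, p = t • a} ∧
    (0 : D) ∉ closure A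

def USCAt {Y Z : Type*} [TopologicalSpace Y] [TopologicalSpace Z]
    (A : Y → Set Z) (x : Y) : Prop :=
  ∀ Ω : Set Z, IsOpen Ω → A x ⊆ Ω → ∀ᶠ x' in 𝓝 x, A x' ⊆ Ω

def BaseUSCAt {Y D : Type*} [TopologicalSpace Y]
    [AddCommMonoid D] [Module ℝ D] [TopologicalSpace D]
    (Φ : Y → Set D) (x : Y) : Prop :=
  ∃ U ∈ 𝓝 x, ∃ A : Y → Set D, (∀ x' ∈ U, IsBase (Φ x') (A x')) ∧ USCAt A x

def ConeUSCAt {Y D : Type*} [TopologicalSpace Y] [SMul ℝ D] [TopologicalSpace D] [Zero D]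
    (Φ : Y → Set D) (x : Y) : Prop :=
  ∀ Ω : Set D, IsOpen Ω → IsCone Ω → Φ x ⊆ Ω ∪ {0} →
    ∀ᶠ x' in 𝓝 x, Φ x' ⊆ Ω ∪ {0}

/-- Norm-to-weak* base upper semicontinuity of a cone-valued map at a point implies
norm-to-weak* cone upper semicontinuity at that point. -/
theorem baseUSCAt_implies_coneUSCAt
    {X : Type*} [NormedAddCommGroup X] [NormedSpace ℝ X] [CompleteSpace X]
    (Φ : X → Set (WeakDual ℝ X)) (hcone : ∀ x, IsCone (Φ x))
    (x : X) (h : BaseUSCAt Φ x) : ConeUSCAt Φ x := by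
  obtain ⟨U, hU, A, hbase, husc⟩ := h
  intro Ω hΩopen hΩcone hΦx
  have hxU : x ∈ U := mem_of_mem_nhds hU
  obtain ⟨hconv, hsub, heq, hcl⟩ := hbase x hxU
  have hAΩ : A x ⊆ Ω := by
    intro a ha
    rcases hΦx (hsub ha) with h0 | h0
    · exact h0
    · simp only [Set.mem_singleton_iff] at h0
      exact absurd (subset_closure (h0 ▸ ha)) hcl
  filter_upwards [hU, husc Ω hΩopen hAΩ] with x' hx'U hx'A
  obtain ⟨_, _, heq', _⟩ := hbase x' hx'U
  intro p hp
  rw [heq'] at hp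
  obtain ⟨t, ht, a, haA, rfl⟩ := hp
  rcases eq_or_lt_of_le ht with h0 | h0
  · right; simp [← h0]
  · left; exact hΩcone a (hx'A haA) t h0
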